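/- If the typed unification algorithm, run on generated constraints (C, T), returns false, then there exists a type substitution unifying all of T but no term substitution unifying all of C. -/

import Mathlib

inductive Tm (F V : Type) : Type
  | var : V → Tm F V
  | app : F → List (Tm F V) → Tm F V

namespace Tm
variable {F V : Type}

def subst (θ : V → Tm F V) : Tm F V → Tm F V
  | var x => θ x
  | app f ts => app f (ts.attach.map (fun t => subst θ t.1))
decreasing_by simp_wf; have := List.sizeOf_lt_of_mem t.2; omega

inductive Occurs (x : V) : Tm F V → Prop
  | var : Occurs x (var x)
  | app {f : F} {ts : List (Tm F V)} {t : Tm F V} : t ∈ ts → Occurs x t → Occurs x (app f ts)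

end Tm


/-- The substitution replacing the single variable `x` by `t`. -/
def single {F V : Type} [DecidableEq V] (x : V) (t : Tm F V) : V → Tm F V :=
  fun y => if y = x then t else Tm.var y

/-- Apply a substitution to both sides of an equation. -/
def applyEq {F V : Type} (σ : V → Tm F V) (p : Tm F V × Tm F V) : Tm F V × Tm F V :=
  (Tm.subst σ p.1, Tm.subst σ p.2)

/-- One step of the Martelli–Montanari rewriting rules on a finite (multi)set of
equations between first-order terms. -/
inductive Step {F V : Type} [DecidableEq V] :
    Multiset (Tm F V × Tm F V) → Multiset (Tm F V × Tm F V) → Prop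
  | decompose (f : F) (ts ss : List (Tm F V)) (R : Multiset (Tm F V × Tm F V))
      (hlen : ts.length = ss.length) :
      Step ((Tm.app f ts, Tm.app f ss) ::ₘ R) (↑(ts.zip ss) + R)
  | delete (t : Tm F V) (R : Multiset (Tm F V × Tm F V)) :
      Step ((t, t) ::ₘ R) R
  | orient (t : Tm F V) (x : V) (R : Multiset (Tm F V × Tm F V))
      (h : ∀ y : V, t ≠ Tm.var y) :
      Step ((t, Tm.var x) ::ₘ R) ((Tm.var x, t) ::ₘ R)
  | elim (x : V) (t : Tm F V) (R : Multiset (Tm F V × Tm F V))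
      (h1 : ¬ Tm.Occurs x t)
      (h2 : ∃ p ∈ R, Tm.Occurs x p.1 ∨ Tm.Occurs x p.2) :
      Step ((Tm.var x, t) ::ₘ R) ((Tm.var x, t) ::ₘ R.map (applyEq (single x t)))

/-- A clash: two applications with different head symbols or different arities. -/
def IsClash {F V : Type} (p : Tm F V × Tm F V) : Prop :=
  ∃ (f g : F) (ts ss : List (Tm F V)),
    p = (Tm.app f ts, Tm.app g ss) ∧ (f ≠ g ∨ ts.length ≠ ss.length)

/-- An occurs-check failure: an equation between a variable and a distinct term
containing it. -/
def IsOccursFail {F V : Type} (p : Tm F V × Tm F V) : Prop :=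
  ∃ (x : V) (t : Tm F V), (p = (Tm.var x, t) ∨ p = (t, Tm.var x)) ∧
    Tm.Occurs x t ∧ t ≠ Tm.var x

/-- A constraint set on which the algorithm fails. -/
def Fails {F V : Type} (S : Multiset (Tm F V × Tm F V)) : Prop :=
  ∃ p ∈ S, IsClash p ∨ IsOccursFail p

/-- A constraint set in solved (normal) form. -/
def SolvedWith {F V : Type} (S : Multiset (Tm F V × Tm F V))
    (L : List (V × Tm F V)) : Prop :=
  S = ↑(L.map (fun p => ((Tm.var p.1 : Tm F V), p.2))) ∧
    (L.map Prod.fst).Nodup ∧ ∀ p ∈ L, ∀ q ∈ L, ¬ Tm.Occurs p.1 q.2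

def Solved {F V : Type} (S : Multiset (Tm F V × Tm F V)) : Prop :=
  ∃ L, SolvedWith S L

/-- `θ` unifies every constraint in `S`. -/
def Unifies {F V : Type} (θ : V → Tm F V) (S : Multiset (Tm F V × Tm F V)) : Prop :=
  ∀ p ∈ S, Tm.subst θ p.1 = Tm.subst θ p.2

/-! ### Auxiliary lemmas -/

namespace Tm
variable {F V : Type}

theorem ind {motive : Tm F V → Prop} (hvar : ∀ x, motive (var x))
    (happ : ∀ f ts, (∀ t ∈ ts, motive t) → motive (app f ts)) : ∀ t, motive t
  | var x => hvar x
  | app f ts => happ f ts (fun t ht => ind hvar happ t)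
decreasing_by have := List.sizeOf_lt_of_mem ht; simp_wf; omega

@[simp] theorem subst_var (θ : V → Tm F V) (x : V) : subst θ (var x) = θ x := by
  rw [subst]

@[simp] theorem subst_app (θ : V → Tm F V) (f : F) (ts : List (Tm F V)) :
    subst θ (app f ts) = app f (ts.map (subst θ)) := by
  rw [subst]; congr 1; exact List.attach_map_val (l := ts) (f := subst θ)

theorem subst_subst (θ σ : V → Tm F V) (t : Tm F V) :
    subst θ (subst σ t) = subst (fun y => subst θ (σ y)) t := by
  induction t using Tm.ind with
  | hvar x => simp
  | happ f ts ih =>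
      simp only [subst_app, List.map_map]
      congr 1
      exact List.map_congr_left (fun t ht => ih t ht)

theorem subst_id_of_not_occurs {θ : V → Tm F V} {t : Tm F V}
    (h : ∀ y, Occurs y t → θ y = var y) : subst θ t = t := by
  induction t using Tm.ind with
  | hvar x => simpa using h x Occurs.var
  | happ f ts ih =>
      simp only [subst_app]
      congr 1
      have : List.map (subst θ) ts = List.map id ts :=
        List.map_congr_left (fun s hs => ih s hs (fun y hy => h y (Occurs.app hs hy)))
      simpa using this

theorem le_sizeOf_subst_of_occurs {x : V} {t : Tm F V} (h : Occurs x t) (θ : V → Tm F V) :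
    sizeOf (θ x) ≤ sizeOf (subst θ t) := by
  induction h with
  | var => simp
  | app hmem _ ih =>
      refine ih.trans (le_of_lt ?_)
      simp only [subst_app, Tm.app.sizeOf_spec]
      have : sizeOf (subst θ _) < sizeOf (List.map (subst θ) _) :=
        List.sizeOf_lt_of_mem (List.mem_map_of_mem (f := subst θ) hmem)
      omega

theorem subst_ne_of_occurs_app {x : V} {f : F} {ts : List (Tm F V)}
    (h : Occurs x (app f ts)) (θ : V → Tm F V) : θ x ≠ subst θ (app f ts) := by
  cases h with
  | @app _ _ s hmem hocc =>
      intro heq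
      have h1 := le_sizeOf_subst_of_occurs hocc θ
      have h2 : sizeOf (subst θ s) < sizeOf (subst θ (app f ts)) := by
        simp only [subst_app, Tm.app.sizeOf_spec]
        have := List.sizeOf_lt_of_mem (List.mem_map_of_mem (f := subst θ) hmem)
        omega
      rw [heq] at h1; omega

end Tm

theorem no_unifier_of_fails {F V : Type} {S : Multiset (Tm F V × Tm F V)}
    (h : Fails S) (θ : V → Tm F V) : ¬ Unifies θ S := by
  obtain ⟨p, hp, hcase⟩ := h
  intro hu
  have heq := hu p hp
  rcases hcase with ⟨f, g, ts, ss, rfl, hne⟩ | ⟨x, t, hpe, hocc, hne⟩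
  · simp only [Tm.subst_app, Tm.app.injEq] at heq
    rcases hne with h | h
    · exact h heq.1
    · apply h
      have : (ts.map (Tm.subst θ)).length = (ss.map (Tm.subst θ)).length := by
        rw [heq.2]
      simpa using this
  · obtain ⟨g, ss, rfl⟩ : ∃ g ss, t = Tm.app g ss := by
      cases t with
      | var y => cases hocc; exact absurd rfl hne
      | app g ss => exact ⟨g, ss, rfl⟩
    rcases hpe with rfl | rfl
    · simp only [Tm.subst_var] at heq
      exact Tm.subst_ne_of_occurs_app hocc θ heq
    · simp only [Tm.subst_var] at heq
      exact Tm.subst_ne_of_occurs_app hocc θ heq.symm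

theorem map_eq_map_iff_zip {α β : Type*} (g : α → β) :
    ∀ (ts ss : List α), ts.length = ss.length →
      (ts.map g = ss.map g ↔ ∀ p ∈ ts.zip ss, g p.1 = g p.2)
  | [], [], _ => by simp
  | t :: ts, s :: ss, h => by
      simp only [List.map_cons, List.cons.injEq, List.zip_cons_cons, List.mem_cons]
      rw [map_eq_map_iff_zip g ts ss (by simpa using h)]
      constructor
      · rintro ⟨h1, h2⟩ p hp
        rcases hp with rfl | hp
        · exact h1
        · exact h2 p hp
      · intro h
        exact ⟨h (t, s) (Or.inl rfl), fun p hp => h p (Or.inr hp)⟩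

theorem step_unifies_iff {F V : Type} [DecidableEq V]
    {S S' : Multiset (Tm F V × Tm F V)} (h : Step S S') (θ : V → Tm F V) :
    Unifies θ S ↔ Unifies θ S' := by
  cases h with
  | decompose f ts ss R hlen =>
      simp only [Unifies, Multiset.mem_cons, Multiset.mem_add, Multiset.mem_coe]
      constructor
      · rintro h p (hp | hp)
        · have := h (Tm.app f ts, Tm.app f ss) (Or.inl rfl)
          simp only [Tm.subst_app, Tm.app.injEq, true_and] at this
          exact (map_eq_map_iff_zip (Tm.subst θ) ts ss hlen).1 this p hp
        · exact h p (Or.inr hp)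
      · rintro h p (rfl | hp)
        · simp only [Tm.subst_app, Tm.app.injEq, true_and]
          exact (map_eq_map_iff_zip (Tm.subst θ) ts ss hlen).2
            (fun p hp => h p (Or.inl hp))
        · exact h p (Or.inr hp)
  | delete t R =>
      simp only [Unifies, Multiset.mem_cons]
      constructor
      · intro h p hp; exact h p (Or.inr hp)
      · rintro h p (rfl | hp)
        · rfl
        · exact h p hp
  | orient t x R hne =>
      simp only [Unifies, Multiset.mem_cons]
      constructor
      · rintro h p (rfl | hp)
        · exact (h (t, Tm.var x) (Or.inl rfl)).symm
        · exact h p (Or.inr hp)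
      · rintro h p (rfl | hp)
        · exact (h (Tm.var x, t) (Or.inl rfl)).symm
        · exact h p (Or.inr hp)
  | elim x t R h1 h2 =>
      simp only [Unifies, Multiset.mem_cons, Multiset.mem_map]
      constructor
      · rintro h p (rfl | ⟨q, hq, rfl⟩)
        · exact h (Tm.var x, t) (Or.inl rfl)
        · have hx : θ x = Tm.subst θ t := by
            simpa using h (Tm.var x, t) (Or.inl rfl)
          have key : ∀ s : Tm F V, Tm.subst θ (Tm.subst (single x t) s) = Tm.subst θ s := by
            intro s
            rw [Tm.subst_subst]
            congr 1
            funext y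
            simp only [single]
            split
            · subst y; exact hx.symm
            · simp
          simp only [applyEq, key]
          exact h q (Or.inr hq)
      · rintro h p (rfl | hp)
        · exact h (Tm.var x, t) (Or.inl rfl)
        · have hx : θ x = Tm.subst θ t := by
            simpa using h (Tm.var x, t) (Or.inl rfl)
          have key : ∀ s : Tm F V, Tm.subst θ (Tm.subst (single x t) s) = Tm.subst θ s := by
            intro s
            rw [Tm.subst_subst]
            congr 1
            funext y
            simp only [single]
            split
            · subst y; exact hx.symm
            · simp
          have := h (applyEq (single x t) p) (Or.inr ⟨p, hp, rfl⟩)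
          simpa [applyEq, key] using this

theorem steps_unifies_iff {F V : Type} [DecidableEq V]
    {S S' : Multiset (Tm F V × Tm F V)} (h : Relation.ReflTransGen Step S S')
    (θ : V → Tm F V) : Unifies θ S ↔ Unifies θ S' := by
  induction h with
  | refl => rfl
  | tail hab hbc ih => rw [ih, step_unifies_iff hbc]

/-- lookup -/
def look {F V : Type} [DecidableEq V] : List (V × Tm F V) → V → Tm F V
  | [], y => Tm.var y
  | p :: L, y => if y = p.1 then p.2 else look L y

theorem look_eq_of_mem {F V : Type} [DecidableEq V] :
    ∀ {L : List (V × Tm F V)}, (L.map Prod.fst).Nodup →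
      ∀ p ∈ L, look L p.1 = p.2
  | [], _, p, hp => by simp at hp
  | q :: L, hnd, p, hp => by
      simp only [List.map_cons, List.nodup_cons] at hnd
      rcases List.mem_cons.mp hp with rfl | hp
      · simp [look]
      · simp only [look]
        rw [if_neg, look_eq_of_mem hnd.2 p hp]
        intro heq
        exact hnd.1 (heq ▸ List.mem_map_of_mem (f := Prod.fst) hp)

theorem look_eq_var {F V : Type} [DecidableEq V] :
    ∀ {L : List (V × Tm F V)} {y : V}, (∀ p ∈ L, p.1 ≠ y) → look L y = Tm.var y
  | [], y, _ => rfl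
  | q :: L, y, h => by
      simp only [look]
      rw [if_neg (fun heq => h q (List.mem_cons_self (a := q) (l := L)) heq.symm)]
      exact look_eq_var (fun p hp => h p (List.mem_cons_of_mem q hp))

theorem solved_has_unifier {F V : Type} [DecidableEq V]
    {S : Multiset (Tm F V × Tm F V)} (h : Solved S) :
    ∃ θ : V → Tm F V, Unifies θ S := by
  obtain ⟨L, hS, hnd, hocc⟩ := h
  refine ⟨look L, ?_⟩
  intro p hp
  rw [hS] at hp
  simp only [Multiset.mem_coe, List.mem_map] at hp
  obtain ⟨q, hq, rfl⟩ := hp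
  simp only [Tm.subst_var]
  rw [look_eq_of_mem hnd q hq]
  rw [Tm.subst_id_of_not_occurs]
  intro y hy
  apply look_eq_var
  intro p hp heq
  exact hocc p hp q hq (heq ▸ hy)

/-- If the typed unification algorithm returns `false` — i.e. the type
phase succeeds (reaching a solved form) but the term phase fails — then some type
substitution unifies all of `T` while no term substitution unifies all of `C`. -/
theorem false_result_sound {F V TF TV : Type} [DecidableEq V] [DecidableEq TV]
    (C C' : Multiset (Tm F V × Tm F V)) (T T' : Multiset (Tm TF TV × Tm TF TV))
    (hT : Relation.ReflTransGen Step T T') (hTsolved : Solved T')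
    (hC : Relation.ReflTransGen Step C C') (hCfail : Fails C') :
    (∃ μ : TV → Tm TF TV, Unifies μ T) ∧ ¬ ∃ θ : V → Tm F V, Unifies θ C := by
  constructor
  · obtain ⟨μ, hμ⟩ := solved_has_unifier hTsolved
    exact ⟨μ, (steps_unifies_iff hT μ).2 hμ⟩
  · rintro ⟨θ, hθ⟩
    exact no_unifier_of_fails hCfail θ ((steps_unifies_iff hC θ).1 hθ)
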